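/- Let G be a connected finite simple graph on n vertices and let s, t be vertices of G. Let G' be the simple graph obtained from G by attaching two new paths of 2n new vertices each: new vertices p_1, …, p_{2n} with edges {s,p_1} and {p_i,p_{i+1}} for 1 ≤ i ≤ 2n−1, and new vertices q_1, …, q_{2n} with edges {t,q_1} and {q_i,q_{i+1}} for 1 ≤ i ≤ 2n−1. Let K be the simple graph obtained from two disjoint copies of G' by identifying the vertex q_{2n} of the first copy with the vertex p_{2n} of the second copy, and call the identified vertex c. Then radius(K) = 4n + dist_G(s,t), and c is the unique vertex of K of minimum eccentricity. -/

import Mathlib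

/-- The eccentricity of a vertex `u` in a finite simple graph: the maximum of the
distances from `u` to the other vertices. -/
noncomputable def gecc {α : Type} [Fintype α] (H : SimpleGraph α) (u : α) : ℕ :=
  Finset.univ.sup fun v => H.dist u v

/-- The radius of a finite simple graph: the minimum eccentricity of a vertex. -/
noncomputable def gradius {α : Type} [Fintype α] (H : SimpleGraph α) : ℕ :=
  ⨅ u, gecc H u

/-- The graph `G'` obtained from `G` by attaching two new paths (chains) of `2n` new
vertices each: `p_1, …, p_{2n}` (the vertices `Sum.inr (Sum.inl i)`, `p_i` having index
`i - 1`) with edges `{s,p_1}` and `{p_i, p_{i+1}}`, and `q_1, …, q_{2n}` (the vertices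
`Sum.inr (Sum.inr i)`) with edges `{t,q_1}` and `{q_i, q_{i+1}}`. -/
def attachChains {V : Type} (G : SimpleGraph V) (s t : V) (n : ℕ) :
    SimpleGraph (V ⊕ (Fin (2 * n) ⊕ Fin (2 * n))) :=
  SimpleGraph.fromRel fun x y =>
    (∃ u v : V, G.Adj u v ∧ x = Sum.inl u ∧ y = Sum.inl v) ∨
    (∃ h : 0 < 2 * n, x = Sum.inl s ∧ y = Sum.inr (Sum.inl ⟨0, h⟩)) ∨
    (∃ i j : Fin (2 * n), (i : ℕ) + 1 = (j : ℕ) ∧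
      x = Sum.inr (Sum.inl i) ∧ y = Sum.inr (Sum.inl j)) ∨
    (∃ h : 0 < 2 * n, x = Sum.inl t ∧ y = Sum.inr (Sum.inr ⟨0, h⟩)) ∨
    (∃ i j : Fin (2 * n), (i : ℕ) + 1 = (j : ℕ) ∧
      x = Sum.inr (Sum.inr i) ∧ y = Sum.inr (Sum.inr j))

/-- The graph obtained from two disjoint copies of `H` by identifying the vertex `b` of the
first copy with the vertex `a` of the second copy.  The first copy is `Sum.inl`, the second
copy is `Sum.inr` (omitting `a`, which is identified with `Sum.inl b`); the identified
vertex `c` is `Sum.inl b`. -/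
def glueGraph {α : Type} [DecidableEq α] (H : SimpleGraph α) (b a : α) :
    SimpleGraph (α ⊕ {x : α // x ≠ a}) :=
  SimpleGraph.fromRel fun x y =>
    (∃ u v : α, H.Adj u v ∧ x = Sum.inl u ∧ y = Sum.inl v) ∨
    (∃ u v : {x : α // x ≠ a}, H.Adj u.1 v.1 ∧ x = Sum.inr u ∧ y = Sum.inr v) ∨
    (∃ v : {x : α // x ≠ a}, H.Adj a v.1 ∧ x = Sum.inl b ∧ y = Sum.inr v)


open SimpleGraph

set_option linter.unusedSectionVars false
set_option linter.unusedTactic false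

lemma lip_walk {α : Type*} {H : SimpleGraph α} {f : α → ℤ}
    (hf : ∀ u v, H.Adj u v → |f u - f v| ≤ 1) {x y : α} (p : H.Walk x y) :
    |f x - f y| ≤ p.length := by
  induction p with
  | nil => simp
  | @cons u v w h p ih =>
      calc |f u - f w| ≤ |f u - f v| + |f v - f w| := abs_sub_le _ _ _
        _ ≤ 1 + p.length := add_le_add (hf _ _ h) ih
        _ = (p.cons h).length := by simp [SimpleGraph.Walk.length_cons]; ring

lemma lip_dist {α : Type*} {H : SimpleGraph α} {f : α → ℤ}
    (hf : ∀ u v, H.Adj u v → |f u - f v| ≤ 1) {x y : α} (hr : H.Reachable x y) :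
    |f x - f y| ≤ H.dist x y := by
  obtain ⟨p, hp⟩ := hr.exists_walk_length_eq_dist
  exact hp ▸ lip_walk hf p

set_option linter.unusedSectionVars false
set_option linter.unusedTactic false

open SimpleGraph

section Setup

variable {V : Type} [Fintype V] [DecidableEq V] (G : SimpleGraph V) (s t : V) (n : ℕ)

/-- distance-to-`q_{2n}` potential on `attachChains G s t n`. -/
noncomputable def fB : (V ⊕ (Fin (2*n) ⊕ Fin (2*n))) → ℕ
  | .inl v => 2*n + G.dist t v
  | .inr (.inl j) => 2*n + G.dist t s + j + 1
  | .inr (.inr j) => 2*n - 1 - j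

/-- the swap map exchanging the two chains. -/
def sw : (V ⊕ (Fin (2*n) ⊕ Fin (2*n))) → (V ⊕ (Fin (2*n) ⊕ Fin (2*n)))
  | .inl v => .inl v
  | .inr (.inl j) => .inr (.inr j)
  | .inr (.inr j) => .inr (.inl j)

lemma sw_sw : ∀ w, sw (V := V) n (sw n w) = w := by rintro (v|j|j) <;> rfl

lemma sw_inj {x y} (h : sw (V := V) n x = sw n y) : x = y := by
  have := congrArg (sw (V := V) n) h
  rwa [sw_sw, sw_sw] at this

variable {G s t n}

lemma ac_adj_G {u v : V} (h : G.Adj u v) :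
    (attachChains G s t n).Adj (.inl u) (.inl v) := by
  rw [attachChains, fromRel_adj]
  exact ⟨by simp [h.ne], Or.inl (Or.inl ⟨u, v, h, rfl, rfl⟩)⟩

lemma ac_adj_sp (h : 0 < 2*n) :
    (attachChains G s t n).Adj (.inl s) (.inr (.inl ⟨0, h⟩)) := by
  rw [attachChains, fromRel_adj]
  exact ⟨by simp, Or.inl (Or.inr (Or.inl ⟨h, rfl, rfl⟩))⟩

lemma ac_adj_tq (h : 0 < 2*n) :
    (attachChains G s t n).Adj (.inl t) (.inr (.inr ⟨0, h⟩)) := by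
  rw [attachChains, fromRel_adj]
  exact ⟨by simp, Or.inl (Or.inr (Or.inr (Or.inr (Or.inl ⟨h, rfl, rfl⟩))))⟩

lemma ac_adj_pp {i j : Fin (2*n)} (h : (i : ℕ) + 1 = j) :
    (attachChains G s t n).Adj (.inr (.inl i)) (.inr (.inl j)) := by
  rw [attachChains, fromRel_adj]
  refine ⟨by simp [Fin.ext_iff]; omega, Or.inl (Or.inr (Or.inr (Or.inl ⟨i, j, h, rfl, rfl⟩)))⟩

lemma ac_adj_qq {i j : Fin (2*n)} (h : (i : ℕ) + 1 = j) :
    (attachChains G s t n).Adj (.inr (.inr i)) (.inr (.inr j)) := by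
  rw [attachChains, fromRel_adj]
  refine ⟨by simp [Fin.ext_iff]; omega, Or.inl (Or.inr (Or.inr (Or.inr (Or.inr ⟨i, j, h, rfl, rfl⟩))))⟩

/-- swapping the chains is a graph hom to the graph with `s`, `t` exchanged. -/
lemma sw_hom {x y} (h : (attachChains G s t n).Adj x y) :
    (attachChains G t s n).Adj (sw n x) (sw n y) := by
  rw [attachChains, fromRel_adj] at h ⊢
  obtain ⟨hne, h⟩ := h
  refine ⟨fun hc => hne (sw_inj n hc), ?_⟩
  rcases h with h | h
  · rcases h with ⟨u, v, huv, rfl, rfl⟩ | ⟨hp, rfl, rfl⟩ | ⟨i, j, hij, rfl, rfl⟩ |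
      ⟨hp, rfl, rfl⟩ | ⟨i, j, hij, rfl, rfl⟩
    · exact Or.inl (Or.inl ⟨u, v, huv, rfl, rfl⟩)
    · exact Or.inl (Or.inr (Or.inr (Or.inr (Or.inl ⟨hp, rfl, rfl⟩))))
    · exact Or.inl (Or.inr (Or.inr (Or.inr (Or.inr ⟨i, j, hij, rfl, rfl⟩))))
    · exact Or.inl (Or.inr (Or.inl ⟨hp, rfl, rfl⟩))
    · exact Or.inl (Or.inr (Or.inr (Or.inl ⟨i, j, hij, rfl, rfl⟩)))
  · rcases h with ⟨u, v, huv, rfl, rfl⟩ | ⟨hp, rfl, rfl⟩ | ⟨i, j, hij, rfl, rfl⟩ |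
      ⟨hp, rfl, rfl⟩ | ⟨i, j, hij, rfl, rfl⟩
    · exact Or.inr (Or.inl ⟨u, v, huv, rfl, rfl⟩)
    · exact Or.inr (Or.inr (Or.inr (Or.inr (Or.inl ⟨hp, rfl, rfl⟩))))
    · exact Or.inr (Or.inr (Or.inr (Or.inr (Or.inr ⟨i, j, hij, rfl, rfl⟩))))
    · exact Or.inr (Or.inr (Or.inl ⟨hp, rfl, rfl⟩))
    · exact Or.inr (Or.inr (Or.inr (Or.inl ⟨i, j, hij, rfl, rfl⟩)))

lemma fB_lip (hconn : G.Connected) {x y} (h : (attachChains G s t n).Adj x y) :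
    |(fB G s t n x : ℤ) - fB G s t n y| ≤ 1 := by
  rw [attachChains, fromRel_adj] at h
  obtain ⟨-, h⟩ := h
  have key : ∀ x y, ((∃ u v : V, G.Adj u v ∧ x = Sum.inl u ∧ y = Sum.inl v) ∨
      (∃ h : 0 < 2 * n, x = Sum.inl s ∧ y = Sum.inr (Sum.inl ⟨0, h⟩)) ∨
      (∃ i j : Fin (2 * n), (i : ℕ) + 1 = (j : ℕ) ∧
        x = Sum.inr (Sum.inl i) ∧ y = Sum.inr (Sum.inl j)) ∨
      (∃ h : 0 < 2 * n, x = Sum.inl t ∧ y = Sum.inr (Sum.inr ⟨0, h⟩)) ∨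
      (∃ i j : Fin (2 * n), (i : ℕ) + 1 = (j : ℕ) ∧
        x = Sum.inr (Sum.inr i) ∧ y = Sum.inr (Sum.inr j))) →
      |(fB G s t n x : ℤ) - fB G s t n y| ≤ 1 := by
    rintro x y (⟨u, v, huv, rfl, rfl⟩ | ⟨hp, rfl, rfl⟩ | ⟨i, j, hij, rfl, rfl⟩ |
      ⟨hp, rfl, rfl⟩ | ⟨i, j, hij, rfl, rfl⟩)
    · have h1 : G.dist t u ≤ G.dist t v + 1 := by
        have := hconn.dist_triangle (u := t) (v := v) (w := u)
        have hd : G.dist v u = 1 := dist_eq_one_iff_adj.mpr huv.symm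
        omega
      have h2 : G.dist t v ≤ G.dist t u + 1 := by
        have := hconn.dist_triangle (u := t) (v := u) (w := v)
        have hd : G.dist u v = 1 := dist_eq_one_iff_adj.mpr huv
        omega
      rw [abs_sub_le_iff]
      constructor <;> simp only [fB] <;> push_cast <;> omega
    · rw [abs_sub_le_iff]
      constructor <;> simp only [fB] <;> push_cast <;> omega
    · rw [abs_sub_le_iff]
      constructor <;> simp only [fB] <;> push_cast <;> omega
    · have hd : G.dist t t = 0 := SimpleGraph.dist_self
      rw [abs_sub_le_iff]
      constructor <;> simp only [fB] <;> push_cast <;> omega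
    · have h1 := i.isLt
      have h2 := j.isLt
      rw [abs_sub_le_iff]
      constructor <;> simp only [fB] <;> push_cast <;> omega
  rcases h with h | h
  · exact key _ _ h
  · rw [abs_sub_comm]; exact key _ _ h

lemma walkQdown (m : ℕ) : ∀ (j : ℕ) (h1 : j + m < 2*n) (h2 : j < 2*n),
    ∃ p : (attachChains G s t n).Walk (.inr (.inr ⟨j+m, h1⟩)) (.inr (.inr ⟨j, h2⟩)),
      p.length = m := by
  induction m with
  | zero => intro j h1 h2; exact ⟨Walk.nil, rfl⟩
  | succ m ih =>
      intro j h1 h2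
      obtain ⟨p, hp⟩ := ih j (by omega) h2
      refine ⟨Walk.cons ((ac_adj_qq (i := ⟨j+m, by omega⟩) (j := ⟨j+m+1, by omega⟩) rfl).symm) p,
        by simp [hp]⟩

lemma walkPdown (m : ℕ) : ∀ (j : ℕ) (h1 : j + m < 2*n) (h2 : j < 2*n),
    ∃ p : (attachChains G s t n).Walk (.inr (.inl ⟨j+m, h1⟩)) (.inr (.inl ⟨j, h2⟩)),
      p.length = m := by
  induction m with
  | zero => intro j h1 h2; exact ⟨Walk.nil, rfl⟩
  | succ m ih =>
      intro j h1 h2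
      obtain ⟨p, hp⟩ := ih j (by omega) h2
      refine ⟨Walk.cons ((ac_adj_pp (i := ⟨j+m, by omega⟩) (j := ⟨j+m+1, by omega⟩) rfl).symm) p,
        by simp [hp]⟩

/-- the embedding of `G` into `attachChains G s t n` as a hom. -/
def homG : G →g attachChains G s t n := ⟨Sum.inl, fun h => ac_adj_G h⟩

lemma walkB (hconn : G.Connected) (i : Fin (2*n)) (hi : (i : ℕ) = 2*n - 1)
    (w : V ⊕ (Fin (2*n) ⊕ Fin (2*n))) :
    ∃ p : (attachChains G s t n).Walk (.inr (.inr i)) w, p.length = fB G s t n w := by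
  have hpos : 0 < 2*n := i.pos
  -- walk from q_{2n-1} down to q_0, then to t
  have hq0 : ∀ (j : Fin (2*n)), ∃ p : (attachChains G s t n).Walk (.inr (.inr i)) (.inr (.inr j)),
      p.length = 2*n - 1 - (j : ℕ) := by
    intro j
    obtain ⟨p, hp⟩ := walkQdown (G := G) (s := s) (t := t) (2*n - 1 - (j : ℕ)) (j : ℕ)
      (by omega) j.isLt
    have e1 : (⟨(j : ℕ) + (2*n - 1 - (j : ℕ)), by omega⟩ : Fin (2*n)) = i := by
      apply Fin.ext; simp; omega
    have e2 : (⟨(j : ℕ), j.isLt⟩ : Fin (2*n)) = j := rfl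
    exact ⟨(p.copy (by rw [e1]) (by rw [e2])), by simpa using hp⟩
  obtain ⟨pq0, hpq0⟩ := hq0 ⟨0, hpos⟩
  have pt : ∃ p : (attachChains G s t n).Walk (.inr (.inr i)) (.inl t), p.length = 2*n := by
    refine ⟨pq0.concat (ac_adj_tq hpos).symm, ?_⟩
    rw [Walk.length_concat, hpq0]; simp only [Fin.val_mk]; omega
  obtain ⟨pt, hpt⟩ := pt
  match w with
  | .inl v =>
      obtain ⟨pg, hpg⟩ := hconn.exists_walk_length_eq_dist t v
      refine ⟨pt.append (pg.map homG), ?_⟩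
      erw [Walk.length_append, Walk.length_map, hpt, hpg]; rfl
  | .inr (.inr j) =>
      obtain ⟨p, hp⟩ := hq0 j
      exact ⟨p, by rw [hp]; rfl⟩
  | .inr (.inl j) =>
      obtain ⟨pg, hpg⟩ := hconn.exists_walk_length_eq_dist t s
      obtain ⟨pup, hpup⟩ := walkPdown (G := G) (s := s) (t := t) (j : ℕ) 0 (by omega) hpos
      have e1 : (⟨0 + (j : ℕ), by omega⟩ : Fin (2*n)) = j := by apply Fin.ext; simp
      refine ⟨((pt.append (pg.map homG)).concat (ac_adj_sp hpos)).append
        (pup.reverse.copy rfl (by rw [e1])), ?_⟩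
      erw [Walk.length_append, Walk.length_concat, Walk.length_append, Walk.length_map,
        Walk.length_copy, Walk.length_reverse, hpt, hpg, hpup]
      show 2*n + G.dist t s + 1 + (j : ℕ) = fB G s t n (.inr (.inl j))
      simp [fB]; omega

variable (G s t n) (i : Fin (2*n))

/-- left copy hom into the glued graph. -/
def homL : attachChains G s t n →g
    glueGraph (attachChains G s t n) (Sum.inr (Sum.inr i)) (Sum.inr (Sum.inl i)) :=
  ⟨Sum.inl, fun {u v} h => by
    rw [glueGraph, fromRel_adj]
    exact ⟨fun hc => h.ne (Sum.inl.inj hc), Or.inl (Or.inl ⟨u, v, h, rfl, rfl⟩)⟩⟩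

/-- right copy embedding. -/
def emb2 : (V ⊕ (Fin (2*n) ⊕ Fin (2*n))) →
    ((V ⊕ (Fin (2*n) ⊕ Fin (2*n))) ⊕ {x : V ⊕ (Fin (2*n) ⊕ Fin (2*n)) // x ≠ Sum.inr (Sum.inl i)}) :=
  fun w => if h : w = Sum.inr (Sum.inl i) then Sum.inl (Sum.inr (Sum.inr i)) else Sum.inr ⟨w, h⟩

/-- right copy hom into the glued graph. -/
def homR : attachChains G s t n →g
    glueGraph (attachChains G s t n) (Sum.inr (Sum.inr i)) (Sum.inr (Sum.inl i)) :=
  ⟨emb2 n i, fun {u v} h => by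
    rw [glueGraph, fromRel_adj]
    by_cases hu : u = Sum.inr (Sum.inl i) <;> by_cases hv : v = Sum.inr (Sum.inl i)
    · exact absurd (hu.trans hv.symm) h.ne
    · simp only [emb2, dif_pos hu, dif_neg hv]
      have h' : (attachChains G s t n).Adj (Sum.inr (Sum.inl i)) v := by rw [← hu]; exact h
      exact ⟨by simp, Or.inl (Or.inr (Or.inr ⟨⟨v, hv⟩, h', trivial, rfl⟩))⟩
    · simp only [emb2, dif_pos hv, dif_neg hu]
      have h' : (attachChains G s t n).Adj (Sum.inr (Sum.inl i)) u := by rw [← hv]; exact h.symm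
      exact ⟨by simp, Or.inr (Or.inr (Or.inr ⟨⟨u, hu⟩, h', trivial, rfl⟩))⟩
    · simp only [emb2, dif_neg hu, dif_neg hv]
      exact ⟨by simp [Subtype.ext_iff]; exact h.ne,
        Or.inl (Or.inr (Or.inl ⟨⟨u, hu⟩, ⟨v, hv⟩, h, rfl, rfl⟩))⟩⟩

/-- the nat-valued distance-to-`c` estimate on the glued graph. -/
noncomputable def gnat :
    ((V ⊕ (Fin (2*n) ⊕ Fin (2*n))) ⊕ {x : V ⊕ (Fin (2*n) ⊕ Fin (2*n)) // x ≠ Sum.inr (Sum.inl i)})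
      → ℕ :=
  Sum.elim (fun w => fB G s t n w) (fun w => fB G t s n (sw n w.1))

/-- the signed potential on the glued graph. -/
noncomputable def gpot :
    ((V ⊕ (Fin (2*n) ⊕ Fin (2*n))) ⊕ {x : V ⊕ (Fin (2*n) ⊕ Fin (2*n)) // x ≠ Sum.inr (Sum.inl i)})
      → ℤ :=
  Sum.elim (fun w => (fB G s t n w : ℤ)) (fun w => -(fB G t s n (sw n w.1) : ℤ))

lemma fB_B (hi : (i : ℕ) = 2*n - 1) : fB G s t n (Sum.inr (Sum.inr i)) = 0 := by
  simp only [fB]; omega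

lemma gpot_lip (hconn : G.Connected) (hi : (i : ℕ) = 2*n - 1) {x y}
    (h : (glueGraph (attachChains G s t n) (Sum.inr (Sum.inr i)) (Sum.inr (Sum.inl i))).Adj x y) :
    |gpot G s t n i x - gpot G s t n i y| ≤ 1 := by
  rw [glueGraph, fromRel_adj] at h
  obtain ⟨-, h⟩ := h
  have key : ∀ x y, ((∃ u v, (attachChains G s t n).Adj u v ∧ x = Sum.inl u ∧ y = Sum.inl v) ∨
      (∃ u v : {x // x ≠ Sum.inr (Sum.inl i)}, (attachChains G s t n).Adj u.1 v.1 ∧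
        x = Sum.inr u ∧ y = Sum.inr v) ∨
      (∃ v : {x // x ≠ Sum.inr (Sum.inl i)}, (attachChains G s t n).Adj (Sum.inr (Sum.inl i)) v.1 ∧
        x = Sum.inl (Sum.inr (Sum.inr i)) ∧ y = Sum.inr v)) →
      |gpot G s t n i x - gpot G s t n i y| ≤ 1 := by
    rintro x y (⟨u, v, huv, rfl, rfl⟩ | ⟨u, v, huv, rfl, rfl⟩ | ⟨v, hav, rfl, rfl⟩)
    · simpa [gpot] using fB_lip hconn huv
    · have h1 := fB_lip (s := t) (t := s) hconn (sw_hom huv)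
      simp only [gpot, Sum.elim_inr]
      rw [show -(fB G t s n (sw n u.1) : ℤ) - -(fB G t s n (sw n v.1) : ℤ)
        = -((fB G t s n (sw n u.1) : ℤ) - (fB G t s n (sw n v.1) : ℤ)) by ring, abs_neg]
      exact h1
    · have h1 := fB_lip (s := t) (t := s) hconn (sw_hom hav)
      have h2 : fB G t s n (sw n (Sum.inr (Sum.inl i))) = 0 := fB_B G t s n i hi
      rw [show sw (V := V) n (Sum.inr (Sum.inl i)) = Sum.inr (Sum.inr i) from rfl] at h1 h2
      rw [h2] at h1
      have h3 : (fB G t s n (sw n v.1) : ℤ) ≤ 1 := by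
        rw [show ((0 : ℕ) : ℤ) - (fB G t s n (sw n v.1) : ℤ)
          = -(fB G t s n (sw n v.1) : ℤ) by push_cast; ring, abs_neg, abs_of_nonneg (by positivity)]
          at h1
        exact h1
      simp only [gpot, Sum.elim_inl, Sum.elim_inr, fB_B G s t n i hi, sub_neg_eq_add]
      rw [abs_of_nonneg (by positivity)]
      push_cast
      omega
  rcases h with h | h
  · exact key _ _ h
  · rw [abs_sub_comm]; exact key _ _ h

lemma walkK (hconn : G.Connected) (hi : (i : ℕ) = 2*n - 1) (y) :
    ∃ p : (glueGraph (attachChains G s t n) (Sum.inr (Sum.inr i))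
        (Sum.inr (Sum.inl i))).Walk (Sum.inl (Sum.inr (Sum.inr i))) y,
      p.length = gnat G s t n i y := by
  match y with
  | .inl w =>
      obtain ⟨p, hp⟩ := walkB hconn i hi w
      exact ⟨p.map (homL G s t n i), by erw [Walk.length_map, hp]; rfl⟩
  | .inr ⟨w, hw⟩ =>
      obtain ⟨p, hp⟩ := walkB (G := G) (s := t) (t := s) hconn i hi (sw n w)
      have hswsw : sw (V := V) n (sw n w) = w := sw_sw n w
      -- map through the chain-swapping hom into `attachChains G s t n`
      let homSW : attachChains G t s n →g attachChains G s t n :=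
        ⟨sw n, fun h => sw_hom h⟩
      have e1 : emb2 (V := V) n i (Sum.inr (Sum.inl i)) = Sum.inl (Sum.inr (Sum.inr i)) := by
        simp [emb2]
      have e2 : emb2 (V := V) n i w = Sum.inr ⟨w, hw⟩ := by simp [emb2, hw]
      refine ⟨((((p.map homSW).copy rfl (by exact hswsw)).map (homR G s t n i)).copy
        (by exact e1) (by exact e2)), ?_⟩
      erw [Walk.length_copy, Walk.length_map, Walk.length_copy, Walk.length_map, hp]
      rfl

lemma fB_le (hconn : G.Connected) (hcard : Fintype.card V = n) :
    ∀ w, fB G s t n w ≤ 4*n + G.dist s t := by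
  have hcomm : G.dist t s = G.dist s t := SimpleGraph.dist_comm
  rintro (v | j | j)
  · obtain ⟨p, hp, hlen⟩ := (hconn t v).exists_path_of_dist
    have := hp.length_lt
    rw [hlen, hcard] at this
    simp only [fB]; omega
  · have := j.isLt
    simp only [fB]; omega
  · simp only [fB]; omega

lemma fB_pos (hi : (i : ℕ) = 2*n - 1) : ∀ w, w ≠ Sum.inr (Sum.inr i) → 0 < fB G s t n w := by
  have hpos : 0 < 2*n := i.pos
  rintro (v | j | j) hne
  · simp only [fB]; omega
  · simp only [fB]; omega
  · have hji : j ≠ i := fun hc => hne (by rw [hc])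
    have h2 : (j : ℕ) ≠ 2*n - 1 := by rw [← hi]; exact fun hc => hji (Fin.ext hc)
    have := j.isLt
    simp only [fB]; omega

end Setup


/-- let `G` be a connected finite simple graph on `n` vertices, `s t` vertices
of `G`, and `G' = attachChains G s t n` the graph obtained by attaching chains of `2n` new
vertices to `s` and to `t`.  Let `K` be obtained from two disjoint copies of `G'` by
identifying the vertex `q_{2n}` (i.e. `Sum.inr (Sum.inr i)` with `(i : ℕ) = 2n - 1`) of the
first copy with the vertex `p_{2n}` (i.e. `Sum.inr (Sum.inl i)`) of the second copy, and
let `c = Sum.inl (Sum.inr (Sum.inr i))` be the identified vertex.  Then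
`radius(K) = 4n + dist_G(s,t)`, and `c` is the unique vertex of `K` of minimum
eccentricity. -/
theorem stmt_8 {V : Type} [Fintype V] [DecidableEq V] (n : ℕ)
    (hcard : Fintype.card V = n) (G : SimpleGraph V) (hconn : G.Connected) (s t : V) :
    ∀ i : Fin (2 * n), (i : ℕ) = 2 * n - 1 →
      gradius (glueGraph (attachChains G s t n)
          (Sum.inr (Sum.inr i)) (Sum.inr (Sum.inl i))) = 4 * n + G.dist s t ∧
      gecc (glueGraph (attachChains G s t n) (Sum.inr (Sum.inr i)) (Sum.inr (Sum.inl i)))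
          (Sum.inl (Sum.inr (Sum.inr i)))
        = gradius (glueGraph (attachChains G s t n)
            (Sum.inr (Sum.inr i)) (Sum.inr (Sum.inl i))) ∧
      (∀ x, gecc (glueGraph (attachChains G s t n)
              (Sum.inr (Sum.inr i)) (Sum.inr (Sum.inl i))) x
            = gradius (glueGraph (attachChains G s t n)
                (Sum.inr (Sum.inr i)) (Sum.inr (Sum.inl i))) →
          x = Sum.inl (Sum.inr (Sum.inr i))) := by
  intro i hi
  set K := glueGraph (attachChains G s t n) (Sum.inr (Sum.inr i)) (Sum.inr (Sum.inl i)) with hK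
  have hii := i.isLt
  -- upper bounds via explicit walks
  have hub : ∀ y, K.dist (Sum.inl (Sum.inr (Sum.inr i))) y ≤ gnat G s t n i y := fun y => by
    obtain ⟨p, hp⟩ := walkK G s t n i hconn hi y
    exact hp ▸ SimpleGraph.dist_le p
  have hreach : ∀ y, K.Reachable (Sum.inl (Sum.inr (Sum.inr i))) y := fun y =>
    ⟨(walkK G s t n i hconn hi y).choose⟩
  have hlow : ∀ x y, K.Reachable x y →
      |gpot G s t n i x - gpot G s t n i y| ≤ K.dist x y := fun x y hr =>
    lip_dist (fun u v h => gpot_lip G s t n i hconn hi h) hr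
  have gnat_le : ∀ y, gnat G s t n i y ≤ 4*n + G.dist s t := by
    rintro (w | ⟨w, hw⟩)
    · exact fB_le G s t n hconn hcard w
    · have h1 := fB_le G t s n hconn hcard (sw n w)
      have h2 : G.dist t s = G.dist s t := SimpleGraph.dist_comm
      rw [h2] at h1
      exact h1
  -- the two tips
  have htip1 : fB G s t n (Sum.inr (Sum.inl i)) = 4*n + G.dist s t := by
    have h2 : G.dist t s = G.dist s t := SimpleGraph.dist_comm
    simp only [fB]; omega
  have htip2 : fB G t s n (sw (V := V) n (Sum.inr (Sum.inr i))) = 4*n + G.dist s t := by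
    show fB G t s n (Sum.inr (Sum.inl i)) = _
    simp only [fB]; omega
  have hBtip2ne : (Sum.inr (Sum.inr i) : V ⊕ (Fin (2*n) ⊕ Fin (2*n))) ≠ Sum.inr (Sum.inl i) := by
    simp
  -- distance from c to tip1 is exactly 4n + d
  have hdtip1 : K.dist (Sum.inl (Sum.inr (Sum.inr i))) (Sum.inl (Sum.inr (Sum.inl i)))
      = 4*n + G.dist s t := by
    refine le_antisymm ((hub _).trans_eq ?_) ?_
    · show fB G s t n (Sum.inr (Sum.inl i)) = _
      exact htip1
    · have hl := hlow _ _ (hreach (Sum.inl (Sum.inr (Sum.inl i))))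
      rw [show gpot G s t n i (Sum.inl (Sum.inr (Sum.inr i)))
          = (fB G s t n (Sum.inr (Sum.inr i)) : ℤ) from rfl,
        show gpot G s t n i (Sum.inl (Sum.inr (Sum.inl i)))
          = (fB G s t n (Sum.inr (Sum.inl i)) : ℤ) from rfl,
        fB_B G s t n i hi, htip1] at hl
      rw [Nat.cast_zero, zero_sub, abs_neg, abs_of_nonneg (by positivity)] at hl
      exact_mod_cast hl
  have hecc_c : gecc K (Sum.inl (Sum.inr (Sum.inr i))) = 4*n + G.dist s t := by
    refine le_antisymm (Finset.sup_le fun y _ => (hub y).trans (gnat_le y)) ?_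
    exact hdtip1 ▸ Finset.le_sup (f := fun v => K.dist (Sum.inl (Sum.inr (Sum.inr i))) v)
      (Finset.mem_univ (Sum.inl (Sum.inr (Sum.inl i))))
  -- any other vertex has eccentricity at least 4n + d + 1
  have hecc_other : ∀ x, x ≠ Sum.inl (Sum.inr (Sum.inr i)) →
      4*n + G.dist s t + 1 ≤ gecc K x := by
    rintro (w | ⟨w, hw⟩) hx
    · -- left copy: far vertex is tip2
      have hwB : w ≠ Sum.inr (Sum.inr i) := fun hc => hx (by rw [hc])
      have hpos := fB_pos G s t n i hi w hwB
      have hr : K.Reachable (Sum.inl w) (Sum.inr ⟨Sum.inr (Sum.inr i), hBtip2ne⟩) :=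
        (hreach (Sum.inl w)).symm.trans (hreach _)
      have hl := hlow _ _ hr
      rw [show gpot G s t n i (Sum.inl w) = (fB G s t n w : ℤ) from rfl,
        show gpot G s t n i (Sum.inr ⟨Sum.inr (Sum.inr i), hBtip2ne⟩)
          = -(fB G t s n (sw (V := V) n (Sum.inr (Sum.inr i))) : ℤ) from rfl,
        htip2, sub_neg_eq_add, abs_of_nonneg (by positivity)] at hl
      have hd : 4*n + G.dist s t + 1 ≤ K.dist (Sum.inl w)
          (Sum.inr ⟨Sum.inr (Sum.inr i), hBtip2ne⟩) := by omega
      exact hd.trans (Finset.le_sup (f := fun v => K.dist (Sum.inl w) v) (Finset.mem_univ _))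
    · -- right copy: far vertex is tip1
      have hwA : sw (V := V) n w ≠ Sum.inr (Sum.inr i) := by
        intro hc
        exact hw (by rw [← sw_sw (V := V) n w, hc]; rfl)
      have hpos := fB_pos G t s n i hi (sw n w) hwA
      have hr : K.Reachable (Sum.inr ⟨w, hw⟩) (Sum.inl (Sum.inr (Sum.inl i))) :=
        (hreach (Sum.inr ⟨w, hw⟩)).symm.trans (hreach _)
      have hl := hlow _ _ hr
      rw [show gpot G s t n i (Sum.inr ⟨w, hw⟩)
          = -(fB G t s n (sw (V := V) n w) : ℤ) from rfl,
        show gpot G s t n i (Sum.inl (Sum.inr (Sum.inl i)))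
          = (fB G s t n (Sum.inr (Sum.inl i)) : ℤ) from rfl, htip1] at hl
      rw [show -(fB G t s n (sw (V := V) n w) : ℤ) - ((4*n + G.dist s t : ℕ) : ℤ)
          = -((fB G t s n (sw (V := V) n w) : ℤ) + ((4*n + G.dist s t : ℕ) : ℤ)) by ring,
        abs_neg, abs_of_nonneg (by positivity)] at hl
      have hd : 4*n + G.dist s t + 1 ≤ K.dist (Sum.inr ⟨w, hw⟩)
          (Sum.inl (Sum.inr (Sum.inl i))) := by omega
      exact hd.trans (Finset.le_sup (f := fun v => K.dist (Sum.inr ⟨w, hw⟩) v)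
        (Finset.mem_univ _))
  haveI : Nonempty ((V ⊕ (Fin (2*n) ⊕ Fin (2*n))) ⊕
      {x : V ⊕ (Fin (2*n) ⊕ Fin (2*n)) // x ≠ Sum.inr (Sum.inl i)}) :=
    ⟨Sum.inl (Sum.inr (Sum.inr i))⟩
  have hrad : gradius K = 4*n + G.dist s t := by
    refine le_antisymm ?_ (le_ciInf fun x => ?_)
    · exact (ciInf_le (OrderBot.bddBelow _) (Sum.inl (Sum.inr (Sum.inr i)))).trans_eq hecc_c
    · by_cases hx : x = Sum.inl (Sum.inr (Sum.inr i))
      · rw [hx, hecc_c]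
      · exact le_trans (by omega) (hecc_other x hx)
  refine ⟨hrad, by rw [hecc_c, hrad], ?_⟩
  intro x hx
  by_contra hne
  have h1 := hecc_other x hne
  rw [hx, hrad] at h1
  omega
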